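/- Let p be a prime and A a commutative ring in which p is a non-zero-divisor, equipped with a ring endomorphism φ : A → A such that φ(a) − a^p ∈ pA for every a ∈ A (a Frobenius lift). Suppose y, y' ∈ A satisfy y − y' ∈ pA, and suppose y^p = p·u and y'^p = p·u' for elements u, u' ∈ A. Then u − u' ∈ pA, and u^p ∈ pA. Consequently, writing R = A/pA, every x ∈ R with x^p = 0 has a well-defined element γ(x) ∈ R satisfying γ(x)^p = 0, namely the image in R of u for any lift y ∈ A of x with y^p = p·u. -/
import Mathlib


/-- Over a ring `A` with `p` a non-zero-divisor and a Frobenius lift `φ`: if `y ≡ y' mod p`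
and `y^p = p·u`, `y'^p = p·u'`, then `u ≡ u' mod p` and `u^p ∈ pA`. Consequently every
`x ∈ A/pA` with `x^p = 0` has a well-defined `γ(x) ∈ A/pA` with `γ(x)^p = 0`, namely the
image of `u` for any lift `y` of `x` with `y^p = p·u`. -/
theorem stmt_7 (p : ℕ) (hp : p.Prime) (A : Type) [CommRing A]
    (hpnzd : (p : A) ∈ nonZeroDivisors A)
    (φ : A →+* A) (hφ : ∀ a : A, φ a - a ^ p ∈ Ideal.span {(p : A)}) :
    (∀ y y' u u' : A, y - y' ∈ Ideal.span {(p : A)} →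
      y ^ p = (p : A) * u → y' ^ p = (p : A) * u' →
      u - u' ∈ Ideal.span {(p : A)} ∧ u ^ p ∈ Ideal.span {(p : A)}) ∧
    (∀ x : A ⧸ Ideal.span {(p : A)}, x ^ p = 0 →
      ∃ γx : A ⧸ Ideal.span {(p : A)}, γx ^ p = 0 ∧
        ∀ y u : A, Ideal.Quotient.mk (Ideal.span {(p : A)}) y = x →
          y ^ p = (p : A) * u →
          Ideal.Quotient.mk (Ideal.span {(p : A)}) u = γx) := by
  have key : ∀ y y' u u' : A, y - y' ∈ Ideal.span {(p : A)} →
      y ^ p = (p : A) * u → y' ^ p = (p : A) * u' →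
      u - u' ∈ Ideal.span {(p : A)} ∧ u ^ p ∈ Ideal.span {(p : A)} := by
    intro y y' u u' hyy' hyu hyu'
    rw [Ideal.mem_span_singleton] at hyy'
    constructor
    · rw [Ideal.mem_span_singleton]
      have h2 : ((p : A)) ^ (1 + 1) ∣ y ^ p ^ 1 - y' ^ p ^ 1 :=
        dvd_sub_pow_of_dvd_sub hyy' 1
      simp only [pow_one] at h2
      rw [hyu, hyu', ← mul_sub] at h2
      obtain ⟨c, hc⟩ := h2
      refine ⟨c, ?_⟩
      have : (p : A) * (u - u') = (p : A) * ((p : A) * c) := by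
        rw [hc]; ring
      exact (mul_cancel_left_mem_nonZeroDivisors hpnzd).mp this
    · -- u^p ∈ pA using the Frobenius lift
      rw [Ideal.mem_span_singleton]
      obtain ⟨a, ha⟩ := Ideal.mem_span_singleton.mp (hφ y)
      have hφy : φ y = (p : A) * (u + a) := by
        have : φ y = y ^ p + (p : A) * a := by linear_combination ha
        rw [this, hyu]; ring
      have hφyp : φ (y ^ p) = (p : A) * φ u := by
        rw [hyu, map_mul, map_natCast]
      have hp2 : 2 ≤ p := hp.two_le
      have hpow : (p : A) * φ u = (p : A) * ((p : A) ^ (p - 1) * (u + a) ^ p) := by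
        rw [← hφyp, map_pow, hφy, mul_pow, ← mul_assoc, ← pow_succ']
        congr 2
        omega
      have hφu : φ u = (p : A) ^ (p - 1) * (u + a) ^ p :=
        (mul_cancel_left_mem_nonZeroDivisors hpnzd).mp hpow
      have hdvdφu : (p : A) ∣ φ u := by
        rw [hφu]
        exact Dvd.dvd.mul_right (dvd_pow_self _ (by omega)) _
      obtain ⟨b, hb⟩ := Ideal.mem_span_singleton.mp (hφ u)
      have : u ^ p = φ u - (p : A) * b := by linear_combination -hb
      rw [this]
      exact dvd_sub hdvdφu ⟨b, rfl⟩
  refine ⟨key, ?_⟩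
  intro x hx
  obtain ⟨y, hy⟩ := Ideal.Quotient.mk_surjective x
  have hyp : y ^ p ∈ Ideal.span {(p : A)} := by
    rw [← Ideal.Quotient.eq_zero_iff_mem, map_pow, hy, hx]
  obtain ⟨u, hu⟩ := Ideal.mem_span_singleton.mp hyp
  refine ⟨Ideal.Quotient.mk _ u, ?_, ?_⟩
  · rw [← map_pow, Ideal.Quotient.eq_zero_iff_mem]
    exact (key y y u u (by simp) hu hu).2
  · intro y₂ u₂ hy₂ hu₂
    have hdiff : y₂ - y ∈ Ideal.span {(p : A)} := by
      rw [← Ideal.Quotient.eq_zero_iff_mem, map_sub, hy, hy₂, sub_self]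
    have := (key y₂ y u₂ u hdiff hu₂ hu).1
    rw [← Ideal.Quotient.eq_zero_iff_mem, map_sub] at this
    linear_combination this
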